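/- Suppose the nonlinearity m is locally Lipschitz continuous, and let (a,b) be initial data in the energy space such that a_i = b_i = 0 for all i > N for some positive integer N. Then any two global weak solutions with initial data (a,b) coincide; moreover every global weak solution with these data satisfies v_i(t) = 0 for all t ≥ 0 and all i > N. -/

import Mathlib

open Filter Set

/-- Derivative from within the half line `[0, ∞)`. -/
noncomputable def derIci (f : ℝ → ℝ) : ℝ → ℝ := derivWithin f (Set.Ici (0 : ℝ))

/-- The pair `(a, b)` belongs to the energy space `D(A^{1/2}) × H`. -/
def InEnergy (lam a b : ℕ → ℝ) : Prop :=
  Summable fun i => (b i) ^ 2 + (lam i) ^ 2 * (a i) ^ 2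

/-- `R_k(a,b) = Σ_{i>k} (b_i² + λ_i² a_i²)`. -/
noncomputable def Rk (lam a b : ℕ → ℝ) (k : ℕ) : ℝ :=
  ∑' i : ℕ, if k < i then (b i) ^ 2 + (lam i) ^ 2 * (a i) ^ 2 else 0

/-- Lacunary (spectral gap) data: `R_k(a,b)·k²·exp(k λ_k) ≤ 1` for infinitely many
positive integers `k`. -/
def Lacunary (lam a b : ℕ → ℝ) : Prop :=
  InEnergy lam a b ∧
    {k : ℕ | 0 < k ∧
      Rk lam a b k * (k : ℝ) ^ 2 * Real.exp ((k : ℝ) * lam k) ≤ 1}.Infinite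

/-- `M(σ) = ∫₀^σ m(s) ds`. -/
noncomputable def Mfun (m : ℝ → ℝ) (σ : ℝ) : ℝ := ∫ s in (0:ℝ)..σ, m s

/-- The conserved quantity `H₀ = Σ_i b_i² + M(Σ_i λ_i² a_i²)`. -/
noncomputable def H0 (lam : ℕ → ℝ) (m : ℝ → ℝ) (a b : ℕ → ℝ) : ℝ :=
  (∑' i, (b i) ^ 2) + Mfun m (∑' i, (lam i) ^ 2 * (a i) ^ 2)

/-- Galerkin approximation of order `n` (components of index `> n` extended by zero):
the solution of `v_i'' + m(Σ_{j≤n} λ_j² v_j²) λ_i² v_i = 0` for `i ≤ n`, with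
`v_i(0) = a_i`, `v_i'(0) = b_i`. -/
def GalerkinSol (lam : ℕ → ℝ) (m : ℝ → ℝ) (a b : ℕ → ℝ) (n : ℕ)
    (v : ℕ → ℝ → ℝ) : Prop :=
  (∀ i, ContDiffOn ℝ 2 (v i) (Set.Ici 0)) ∧
  (∀ i ≤ n, v i 0 = a i) ∧
  (∀ i ≤ n, derIci (v i) 0 = b i) ∧
  (∀ i, n < i → ∀ t, v i t = 0) ∧
  (∀ i ≤ n, ∀ t, 0 ≤ t →
    derIci (derIci (v i)) t
      + m (∑ j ∈ Finset.range (n + 1), (lam j) ^ 2 * (v j t) ^ 2)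
        * (lam i) ^ 2 * v i t = 0)

/-- Global weak solution with initial data `(a,b)`: a family `v_i ∈ C²([0,∞))` with
`v_i(0) = a_i`, `v_i'(0) = b_i`, such that `Σ v_i'(t)²` and `Σ λ_i² v_i(t)²` converge,
the maps `t ↦ (v_i'(t))_i` and `t ↦ (λ_i v_i(t))_i` are continuous from `[0,∞)` into
`ℓ²`, and `v_i'' + m(Σ_j λ_j² v_j²) λ_i² v_i = 0` for every `i` and every `t ≥ 0`. -/
def WeakSol (lam : ℕ → ℝ) (m : ℝ → ℝ) (a b : ℕ → ℝ) (v : ℕ → ℝ → ℝ) : Prop :=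
  (∀ i, ContDiffOn ℝ 2 (v i) (Set.Ici 0)) ∧
  (∀ i, v i 0 = a i) ∧
  (∀ i, derIci (v i) 0 = b i) ∧
  (∀ t, 0 ≤ t → Summable fun i => (derIci (v i) t) ^ 2) ∧
  (∀ t, 0 ≤ t → Summable fun i => (lam i) ^ 2 * (v i t) ^ 2) ∧
  (∀ t₀, 0 ≤ t₀ → Tendsto (fun t => ∑' i, (derIci (v i) t - derIci (v i) t₀) ^ 2)
      (nhdsWithin t₀ (Set.Ici 0)) (nhds 0)) ∧
  (∀ t₀, 0 ≤ t₀ → Tendsto (fun t => ∑' i, (lam i) ^ 2 * (v i t - v i t₀) ^ 2)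
      (nhdsWithin t₀ (Set.Ici 0)) (nhds 0)) ∧
  (∀ i, ∀ t, 0 ≤ t →
    derIci (derIci (v i)) t
      + m (∑' j, (lam j) ^ 2 * (v j t) ^ 2) * (lam i) ^ 2 * v i t = 0)


/-- Cauchy–Schwarz for tsums. -/
lemma tsum_abs_mul_le {a b : ℕ → ℝ} (ha : Summable fun i => a i ^ 2)
    (hb : Summable fun i => b i ^ 2) :
    ∑' i, |a i * b i| ≤ Real.sqrt (∑' i, a i ^ 2) * Real.sqrt (∑' i, b i ^ 2) := by
  have hsum : Summable fun i => |a i * b i| := by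
    apply Summable.of_nonneg_of_le (fun i => abs_nonneg _) (fun i => ?_) ((ha.add hb).div_const 2)
    rw [abs_mul]
    nlinarith [sq_nonneg (|a i| - |b i|), sq_abs (a i), sq_abs (b i)]
  refine hsum.tsum_le_of_sum_le fun s => ?_
  have h1 : ∑ i ∈ s, |a i * b i| ≤
      Real.sqrt (∑ i ∈ s, a i ^ 2) * Real.sqrt (∑ i ∈ s, b i ^ 2) := by
    have := Finset.sum_mul_sq_le_sq_mul_sq s (fun i => |a i|) (fun i => |b i|)
    simp only [sq_abs, ← abs_mul] at this
    calc ∑ i ∈ s, |a i * b i| = Real.sqrt ((∑ i ∈ s, |a i * b i|) ^ 2) := by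
          rw [Real.sqrt_sq (Finset.sum_nonneg fun i _ => abs_nonneg _)]
      _ ≤ Real.sqrt ((∑ i ∈ s, a i ^ 2) * ∑ i ∈ s, b i ^ 2) := Real.sqrt_le_sqrt this
      _ = _ := Real.sqrt_mul (Finset.sum_nonneg fun i _ => sq_nonneg _) _
  refine h1.trans (mul_le_mul ?_ ?_ (Real.sqrt_nonneg _) (Real.sqrt_nonneg _)) <;>
    exact Real.sqrt_le_sqrt (Summable.sum_le_tsum _ (fun i _ => sq_nonneg _) (by assumption))

/-- A locally Lipschitz real function is Lipschitz on compact sets. -/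
lemma LocallyLipschitz.exists_lipschitzOnWith_isCompact {f : ℝ → ℝ}
    (hf : LocallyLipschitz f) {s : Set ℝ} (hs : IsCompact s) :
    ∃ K : NNReal, LipschitzOnWith K f s := by
  obtain ⟨C, hC⟩ := hs.exists_bound_of_continuousOn (hf.continuous.continuousOn)
  choose K t ht hK using hf
  obtain ⟨F, hF⟩ := hs.elim_finite_subcover (fun x : ℝ => interior (t x))
    (fun _ => isOpen_interior)
    (fun x hx => Set.mem_iUnion.2 ⟨x, mem_interior_iff_mem_nhds.2 (ht x)⟩)
  have hcov : s ⊆ ⋃ i : F, interior (t i) := by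
    intro x hx
    obtain ⟨i, hi, hxi⟩ := Set.mem_iUnion₂.1 (hF hx)
    exact Set.mem_iUnion.2 ⟨⟨i, hi⟩, hxi⟩
  obtain ⟨δ, hδ, hleb⟩ := lebesgue_number_lemma_of_metric (c := fun x : F => interior (t x))
    hs (fun _ => isOpen_interior) hcov
  set KF : NNReal := F.sup (fun x => K x) with hKF
  refine ⟨max KF (Real.toNNReal (4 * (max C 0) / δ)), fun x hx y hy => ?_⟩
  rcases le_or_gt (dist x y) (δ/2) with hd | hd
  · obtain ⟨i, hball⟩ := hleb x hx
    have hxi : x ∈ t i := interior_subset (hball (Metric.mem_ball_self hδ))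
    have hyi : y ∈ t i := interior_subset (hball (by
      simp only [Metric.mem_ball, dist_comm]
      linarith))
    calc edist (f x) (f y) ≤ K i * edist x y := hK i hxi hyi
      _ ≤ _ := by
          gcongr
          exact le_max_of_le_left (Finset.le_sup i.2)
  · have h2 : dist (f x) (f y) ≤ (4 * max C 0 / δ) * dist x y := by
      have h1 : dist (f x) (f y) ≤ 2 * (max C 0) := by
        calc dist (f x) (f y) ≤ ‖f x‖ + ‖f y‖ := dist_le_norm_add_norm _ _
          _ ≤ 2 * max C 0 := by
              have hx' : ‖f x‖ ≤ max C 0 := le_max_of_le_left (hC x hx)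
              have hy' : ‖f y‖ ≤ max C 0 := le_max_of_le_left (hC y hy)
              linarith
      calc dist (f x) (f y) ≤ 2 * max C 0 := h1
        _ = (4 * max C 0 / δ) * (δ/2) := by field_simp; ring
        _ ≤ (4 * max C 0 / δ) * dist x y := by
            have : (0:ℝ) ≤ 4 * max C 0 / δ := by positivity
            nlinarith
    rw [edist_dist, edist_dist]
    calc ENNReal.ofReal (dist (f x) (f y)) ≤
        ENNReal.ofReal ((4 * max C 0 / δ) * dist x y) := ENNReal.ofReal_le_ofReal h2
      _ = ENNReal.ofReal (4 * max C 0 / δ) * ENNReal.ofReal (dist x y) :=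
          ENNReal.ofReal_mul (by positivity)
      _ ≤ _ := by
          rw [ENNReal.ofReal, ← edist_dist]
          gcongr
          exact_mod_cast le_max_right _ _



noncomputable def mext (m : ℝ → ℝ) : ℝ → ℝ := fun x => m (max x 0)

lemma mext_eq (m : ℝ → ℝ) {x : ℝ} (hx : 0 ≤ x) : mext m x = m x := by
  simp [mext, max_eq_left hx]

lemma mext_locallyLipschitz {m : ℝ → ℝ}
    (hm_lip : ∀ x, 0 ≤ x → ∃ K : NNReal, ∃ s ∈ nhdsWithin x (Set.Ici 0),
      LipschitzOnWith K m s) : LocallyLipschitz (mext m) := by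
  intro x
  obtain ⟨K, s, hs, hK⟩ := hm_lip (max x 0) (le_max_right _ _)
  rw [mem_nhdsWithin] at hs
  obtain ⟨u, hu_open, hxu, hus⟩ := hs
  refine ⟨K, (fun y => max y 0) ⁻¹' u, ?_, ?_⟩
  · exact (hu_open.preimage (continuous_id.max continuous_const)).mem_nhds hxu
  · have hg : LipschitzWith 1 (fun y : ℝ => max y 0) := LipschitzWith.id.max_const 0
    have hmt : Set.MapsTo (fun y : ℝ => max y 0) ((fun y => max y 0) ⁻¹' u) s :=
      fun y hy => hus ⟨hy, show (0:ℝ) ≤ max y 0 from le_max_right _ _⟩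
    have h := hK.comp (hg.lipschitzOnWith (s := (fun y : ℝ => max y 0) ⁻¹' u)) hmt
    rw [mul_one] at h
    exact h

lemma hasDerivWithinAt_derIci_fst {f : ℝ → ℝ} (hf : ContDiffOn ℝ 2 f (Set.Ici 0))
    {t : ℝ} (ht : 0 ≤ t) :
    HasDerivWithinAt f (derivWithin f (Set.Ici 0) t) (Set.Ici t) t :=
  (((hf.differentiableOn (by norm_num)) t ht).hasDerivWithinAt).mono
    (fun x hx => le_trans ht hx)

lemma contDiffOn_derIci {f : ℝ → ℝ} (hf : ContDiffOn ℝ 2 f (Set.Ici 0)) :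
    ContDiffOn ℝ 1 (derivWithin f (Set.Ici 0)) (Set.Ici 0) :=
  hf.derivWithin (uniqueDiffOn_Ici 0) (by norm_num)

lemma hasDerivWithinAt_derIci_snd {f : ℝ → ℝ} (hf : ContDiffOn ℝ 2 f (Set.Ici 0))
    {t : ℝ} (ht : 0 ≤ t) :
    HasDerivWithinAt (derivWithin f (Set.Ici 0))
      (derivWithin (derivWithin f (Set.Ici 0)) (Set.Ici 0) t) (Set.Ici t) t :=
  ((((contDiffOn_derIci hf).differentiableOn (by norm_num)) t ht).hasDerivWithinAt).mono
    (fun x hx => le_trans ht hx)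

lemma sigma_continuousOn {lam : ℕ → ℝ} {v : ℕ → ℝ → ℝ}
    (hsum : ∀ t, 0 ≤ t → Summable fun i => (lam i) ^ 2 * (v i t) ^ 2)
    (hcont : ∀ t₀, 0 ≤ t₀ →
      Tendsto (fun t => ∑' i, (lam i) ^ 2 * (v i t - v i t₀) ^ 2)
        (nhdsWithin t₀ (Set.Ici 0)) (nhds 0)) :
    ContinuousOn (fun t => ∑' i, (lam i) ^ 2 * (v i t) ^ 2) (Set.Ici 0) := by
  intro t₀ ht₀
  set σ : ℝ → ℝ := fun t => ∑' i, (lam i) ^ 2 * (v i t) ^ 2 with hσ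
  set d : ℝ → ℝ := fun t => ∑' i, (lam i) ^ 2 * (v i t - v i t₀) ^ 2 with hd
  have key : ∀ t, 0 ≤ t → |σ t - σ t₀| ≤ d t + 2 * (Real.sqrt (d t) * Real.sqrt (σ t₀)) := by
    intro t ht
    set x : ℕ → ℝ := fun i => lam i * (v i t - v i t₀) with hx
    set y : ℕ → ℝ := fun i => lam i * (v i t₀) with hy
    have hx2 : Summable fun i => x i ^ 2 := by
      apply Summable.of_nonneg_of_le (fun i => sq_nonneg _) (fun i => ?_)
        (((hsum t ht).mul_left 2).add ((hsum t₀ ht₀).mul_left 2))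
      simp only [hx]
      nlinarith [sq_nonneg (lam i * (v i t) + lam i * (v i t₀)), sq_nonneg (lam i)]
    have hy2 : Summable fun i => y i ^ 2 := by
      have := hsum t₀ ht₀
      apply this.congr
      intro i; simp [hy]; ring
    have hxy : Summable fun i => x i * y i := by
      apply Summable.of_abs
      apply Summable.of_nonneg_of_le (fun i => abs_nonneg _) (fun i => ?_)
        ((hx2.add hy2).div_const 2)
      rw [abs_mul]
      nlinarith [sq_nonneg (|x i| - |y i|), sq_abs (x i), sq_abs (y i)]
    have hdt : d t = ∑' i, x i ^ 2 := by
      apply tsum_congr; intro i; simp [hx]; ring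
    have hσt₀ : σ t₀ = ∑' i, y i ^ 2 := by
      apply tsum_congr; intro i; simp [hy]; ring
    have hexp : σ t = (∑' i, x i ^ 2) + (2 * ∑' i, x i * y i) + σ t₀ := by
      have h1 : ∀ i, (lam i) ^ 2 * (v i t) ^ 2
          = (x i ^ 2 + 2 * (x i * y i)) + (lam i) ^ 2 * (v i t₀) ^ 2 := by
        intro i; simp only [hx, hy]; ring
      have h2 : σ t = ∑' i, ((x i ^ 2 + 2 * (x i * y i)) + (lam i) ^ 2 * (v i t₀) ^ 2) :=
        tsum_congr h1
      rw [h2, Summable.tsum_add (((hx2.add ((hxy).mul_left 2)))) (hsum t₀ ht₀),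
        Summable.tsum_add hx2 ((hxy).mul_left 2), tsum_mul_left]
    have hcs : |∑' i, x i * y i| ≤ Real.sqrt (d t) * Real.sqrt (σ t₀) := by
      rw [hdt, hσt₀]
      calc |∑' i, x i * y i| ≤ ∑' i, |x i * y i| := by
            have := norm_tsum_le_tsum_norm (f := fun i => x i * y i)
              (by simpa only [Real.norm_eq_abs] using hxy.abs)
            simpa only [Real.norm_eq_abs] using this
        _ ≤ _ := tsum_abs_mul_le hx2 hy2
    rw [hexp, ← hdt]
    rw [abs_le]
    constructor
    · have h0 : 0 ≤ d t := by rw [hdt]; exact tsum_nonneg fun i => sq_nonneg _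
      have := abs_le.1 hcs
      nlinarith [this.1, this.2]
    · have := abs_le.1 hcs
      nlinarith [this.1, this.2]
  have hdto : Tendsto d (nhdsWithin t₀ (Set.Ici 0)) (nhds 0) := hcont t₀ ht₀
  have hbound : Tendsto (fun t => d t + 2 * (Real.sqrt (d t) * Real.sqrt (σ t₀)))
      (nhdsWithin t₀ (Set.Ici 0)) (nhds 0) := by
    have hsq : Tendsto (fun t => Real.sqrt (d t)) (nhdsWithin t₀ (Set.Ici 0)) (nhds 0) := by
      have := (Real.continuous_sqrt.tendsto 0).comp hdto
      simpa [Function.comp_def] using this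
    have := hdto.add ((hsq.mul_const (Real.sqrt (σ t₀))).const_mul 2)
    simpa using this
  have habs : Tendsto (fun t => |σ t - σ t₀|) (nhdsWithin t₀ (Set.Ici 0)) (nhds 0) := by
    apply squeeze_zero' (eventually_nhdsWithin_of_forall fun t _ => abs_nonneg _)
      (eventually_nhdsWithin_of_forall fun t ht => key t ht) hbound
  rw [ContinuousWithinAt, tendsto_iff_dist_tendsto_zero]
  simpa [Real.dist_eq] using habs

lemma vanish_of_zero_init {lam : ℕ → ℝ} {m : ℝ → ℝ} {a b : ℕ → ℝ} {v : ℕ → ℝ → ℝ}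
    (hm_lip : ∀ x, 0 ≤ x → ∃ K : NNReal, ∃ s ∈ nhdsWithin x (Set.Ici 0),
      LipschitzOnWith K m s)
    (hv : WeakSol lam m a b v) {i : ℕ} (hai : a i = 0) (hbi : b i = 0) :
    ∀ t, 0 ≤ t → v i t = 0 := by
  obtain ⟨hC2, h0, h0', hs1, hs2, hc1, hc2, hode⟩ := hv
  simp only [derIci] at h0' hode
  set σ : ℝ → ℝ := fun t => ∑' j, (lam j) ^ 2 * (v j t) ^ 2 with hσdef
  have hσc : ContinuousOn σ (Set.Ici 0) := sigma_continuousOn hs2 hc2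
  have hσ0 : ∀ t, 0 ≤ σ t := fun t => tsum_nonneg fun j => mul_nonneg (sq_nonneg _) (sq_nonneg _)
  intro t ht
  set T : ℝ := t + 1 with hT
  have hTpos : (0:ℝ) ≤ T := by linarith
  suffices h : ∀ s ∈ Icc (0:ℝ) T, v i s = 0 from h t ⟨ht, by linarith⟩
  have hmc : ContinuousOn (fun s => mext m (σ s)) (Icc 0 T) :=
    (mext_locallyLipschitz hm_lip).continuous.comp_continuousOn
      (hσc.mono (fun x hx => hx.1))
  obtain ⟨C, hC⟩ := isCompact_Icc.exists_bound_of_continuousOn hmc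
  set C' : ℝ := max C 0 with hC'
  set c : ℝ → ℝ := fun s => mext m (σ (min (max s 0) T)) with hcdef
  have hclamp : ∀ s : ℝ, min (max s 0) T ∈ Icc (0:ℝ) T :=
    fun s => ⟨le_min (le_max_right _ _) hTpos, min_le_right _ _⟩
  have hcb : ∀ s, |c s| ≤ C' := by
    intro s
    calc |c s| = ‖mext m (σ (min (max s 0) T))‖ := by rw [Real.norm_eq_abs]
      _ ≤ C := hC _ (hclamp s)
      _ ≤ C' := le_max_left _ _
  set F : ℝ → ℝ × ℝ → ℝ × ℝ := fun s y => (y.2, -(c s) * (lam i) ^ 2 * y.1) with hF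
  set K : NNReal := Real.toNNReal (max 1 (C' * (lam i) ^ 2)) with hKdef
  have hC'0 : 0 ≤ C' := le_max_right _ _
  have hKcoe : (K : ℝ) = max 1 (C' * (lam i) ^ 2) :=
    Real.coe_toNNReal _ (le_trans zero_le_one (le_max_left _ _))
  have hlip : ∀ s, LipschitzWith K (F s) := by
    intro s
    apply LipschitzWith.of_dist_le_mul
    intro y z
    rw [Prod.dist_eq, hKcoe]
    have hd : (0:ℝ) ≤ dist y z := dist_nonneg
    apply max_le
    · calc dist (F s y).1 (F s z).1 = dist y.2 z.2 := rfl
        _ ≤ dist y z := by rw [Prod.dist_eq]; exact le_max_right _ _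
        _ ≤ max 1 (C' * (lam i) ^ 2) * dist y z := by nlinarith [le_max_left (1:ℝ) (C' * (lam i)^2)]
    · have h1 : dist (F s y).2 (F s z).2 = |c s| * (lam i) ^ 2 * dist y.1 z.1 := by
        simp only [hF, Real.dist_eq]
        rw [show -c s * lam i ^ 2 * y.1 - -c s * lam i ^ 2 * z.1
            = -(c s * (lam i ^ 2 * (y.1 - z.1))) by ring, abs_neg, abs_mul, abs_mul,
          abs_of_nonneg (sq_nonneg (lam i))]
        ring
      have h2 : dist y.1 z.1 ≤ dist y z := by rw [Prod.dist_eq]; exact le_max_left _ _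
      have h3 : |c s| * (lam i) ^ 2 ≤ C' * (lam i) ^ 2 :=
        mul_le_mul_of_nonneg_right (hcb s) (sq_nonneg _)
      calc dist (F s y).2 (F s z).2 = |c s| * (lam i) ^ 2 * dist y.1 z.1 := h1
        _ ≤ C' * (lam i) ^ 2 * dist y z :=
            mul_le_mul h3 h2 dist_nonneg (mul_nonneg hC'0 (sq_nonneg _))
        _ ≤ max 1 (C' * (lam i) ^ 2) * dist y z :=
            mul_le_mul_of_nonneg_right (le_max_right _ _) hd
  have hIccIci : Icc (0:ℝ) T ⊆ Ici 0 := fun x hx => hx.1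
  set f : ℝ → ℝ × ℝ := fun s => (v i s, derivWithin (v i) (Set.Ici 0) s) with hfdef
  have hfc : ContinuousOn f (Icc 0 T) :=
    (((hC2 i).continuousOn).mono hIccIci).prodMk
      (((contDiffOn_derIci (hC2 i)).continuousOn).mono hIccIci)
  have hf' : ∀ s ∈ Ico (0:ℝ) T, HasDerivWithinAt f (F s (f s)) (Ici s) s := by
    intro s hs
    have h1 := hasDerivWithinAt_derIci_fst (hC2 i) hs.1
    have h2 := hasDerivWithinAt_derIci_snd (hC2 i) hs.1
    have hcl : min (max s 0) T = s := by
      rw [max_eq_left hs.1, min_eq_left hs.2.le]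
    have hval : derivWithin (derivWithin (v i) (Set.Ici 0)) (Set.Ici 0) s
        = -(c s) * (lam i) ^ 2 * v i s := by
      have hodei := hode i s hs.1
      simp only [hcdef, hcl, mext_eq m (hσ0 s)]
      simp only [hσdef]
      linarith
    have := h1.prodMk (hval ▸ h2)
    exact this
  have hgc : ContinuousOn (fun _ : ℝ => ((0:ℝ), (0:ℝ))) (Icc 0 T) := continuousOn_const
  have hg' : ∀ s ∈ Ico (0:ℝ) T,
      HasDerivWithinAt (fun _ : ℝ => ((0:ℝ), (0:ℝ))) (F s ((0:ℝ), (0:ℝ))) (Ici s) s := by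
    intro s hs
    have h : F s ((0:ℝ), (0:ℝ)) = ((0:ℝ), (0:ℝ)) := by simp [hF]
    rw [h]
    exact hasDerivWithinAt_const _ _ _
  have heq : EqOn f (fun _ => ((0:ℝ), (0:ℝ))) (Icc 0 T) := by
    apply ODE_solution_unique hlip hfc hf' hgc hg'
    simp only [hfdef, h0 i, h0' i, hai, hbi]
  intro s hs
  have := heq hs
  exact congrArg Prod.fst this

set_option maxHeartbeats 1000000 in
lemma uniq_fin {lam : ℕ → ℝ} {m : ℝ → ℝ} {a b : ℕ → ℝ} {v w : ℕ → ℝ → ℝ} {N : ℕ}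
    (hm_lip : ∀ x, 0 ≤ x → ∃ K : NNReal, ∃ s ∈ nhdsWithin x (Set.Ici 0),
      LipschitzOnWith K m s)
    (hv : WeakSol lam m a b v) (hw : WeakSol lam m a b w)
    (hvz : ∀ j, N < j → ∀ t, 0 ≤ t → v j t = 0)
    (hwz : ∀ j, N < j → ∀ t, 0 ≤ t → w j t = 0) :
    ∀ i, ∀ t, 0 ≤ t → v i t = w i t := by
  set n : ℕ := N + 1 with hn
  obtain ⟨hC2v, h0v, h0v', _, _, _, _, hodev⟩ := hv
  obtain ⟨hC2w, h0w, h0w', _, _, _, _, hodew⟩ := hw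
  simp only [derIci] at h0v' h0w' hodev hodew
  set Q : (Fin n → ℝ) → ℝ := fun u => ∑ j : Fin n, (lam j) ^ 2 * (u j) ^ 2 with hQdef
  have hQ0 : ∀ u, 0 ≤ Q u := fun u => Finset.sum_nonneg fun j _ =>
    mul_nonneg (sq_nonneg _) (sq_nonneg _)
  have hσQv : ∀ s, 0 ≤ s →
      (∑' j, (lam j) ^ 2 * (v j s) ^ 2) = Q (fun j : Fin n => v j s) := by
    intro s hs
    rw [tsum_eq_sum (s := Finset.range n) (fun j hj => by
      rw [hvz j (by simpa [hn, Nat.lt_succ_iff] using (Finset.mem_range.not.1 hj)) s hs]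
      ring)]
    rw [hQdef]
    exact (Fin.sum_univ_eq_sum_range (fun j => (lam j) ^ 2 * (v j s) ^ 2) n).symm
  have hσQw : ∀ s, 0 ≤ s →
      (∑' j, (lam j) ^ 2 * (w j s) ^ 2) = Q (fun j : Fin n => w j s) := by
    intro s hs
    rw [tsum_eq_sum (s := Finset.range n) (fun j hj => by
      rw [hwz j (by simpa [hn, Nat.lt_succ_iff] using (Finset.mem_range.not.1 hj)) s hs]
      ring)]
    rw [hQdef]
    exact (Fin.sum_univ_eq_sum_range (fun j => (lam j) ^ 2 * (w j s) ^ 2) n).symm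
  set G : ((Fin n → ℝ) × (Fin n → ℝ)) → ((Fin n → ℝ) × (Fin n → ℝ)) :=
    fun y => (y.2, fun j => -(mext m (Q y.1)) * (lam j) ^ 2 * y.1 j) with hG
  set fv : ℝ → (Fin n → ℝ) × (Fin n → ℝ) :=
    fun s => (fun j : Fin n => v j s, fun j : Fin n => derivWithin (v j) (Set.Ici 0) s) with hfv
  set fw : ℝ → (Fin n → ℝ) × (Fin n → ℝ) :=
    fun s => (fun j : Fin n => w j s, fun j : Fin n => derivWithin (w j) (Set.Ici 0) s) with hfw
  intro i t ht
  set T : ℝ := t + 1 with hT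
  have hTpos : (0:ℝ) ≤ T := by linarith
  have hIccIci : Icc (0:ℝ) T ⊆ Ici 0 := fun x hx => hx.1
  have hfvc : ContinuousOn fv (Icc 0 T) := by
    rw [hfv]
    exact (continuousOn_pi.2 fun j : Fin n => ((hC2v j).continuousOn.mono hIccIci)).prodMk
      (continuousOn_pi.2 fun j : Fin n => ((contDiffOn_derIci (hC2v j)).continuousOn.mono hIccIci))
  have hfwc : ContinuousOn fw (Icc 0 T) := by
    rw [hfw]
    exact (continuousOn_pi.2 fun j : Fin n => ((hC2w j).continuousOn.mono hIccIci)).prodMk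
      (continuousOn_pi.2 fun j : Fin n => ((contDiffOn_derIci (hC2w j)).continuousOn.mono hIccIci))
  obtain ⟨Rv, hRv⟩ := isCompact_Icc.exists_bound_of_continuousOn hfvc
  obtain ⟨Rw, hRw⟩ := isCompact_Icc.exists_bound_of_continuousOn hfwc
  set R : ℝ := max Rv Rw with hR
  have hR0 : 0 ≤ R :=
    le_trans (norm_nonneg (fv 0)) (le_trans (hRv 0 ⟨le_refl _, hTpos⟩) (le_max_left _ _))
  have hS0 : (0:ℝ) ≤ ∑ j : Fin n, (lam j) ^ 2 :=
    Finset.sum_nonneg fun j _ => sq_nonneg _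
  set S : ℝ := ∑ j : Fin n, (lam j) ^ 2 with hSdef
  have hlamS : ∀ j : Fin n, (lam j) ^ 2 ≤ S := by
    intro j
    rw [hSdef]
    exact Finset.single_le_sum (fun (j : Fin n) _ => sq_nonneg (lam j)) (Finset.mem_univ j)
  obtain ⟨Km, hKm⟩ := (mext_locallyLipschitz hm_lip).exists_lipschitzOnWith_isCompact
    (isCompact_Icc (a := (0:ℝ)) (b := S * R ^ 2))
  obtain ⟨Cm, hCm⟩ := isCompact_Icc.exists_bound_of_continuousOn
    ((mext_locallyLipschitz hm_lip).continuous.continuousOn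
      (s := Icc (0:ℝ) (S * R ^ 2)))
  set Cm' : ℝ := max Cm 0 with hCm'
  have hCm'0 : 0 ≤ Cm' := le_max_right _ _
  have hQmem : ∀ u : Fin n → ℝ, ‖u‖ ≤ R → Q u ∈ Icc (0:ℝ) (S * R ^ 2) := by
    intro u hu
    refine ⟨hQ0 u, ?_⟩
    have : ∀ j : Fin n, (lam j) ^ 2 * (u j) ^ 2 ≤ (lam j) ^ 2 * R ^ 2 := by
      intro j
      have h1 : |u j| ≤ R := le_trans (norm_le_pi_norm u j) hu
      have h2 : (u j) ^ 2 ≤ R ^ 2 := by nlinarith [abs_nonneg (u j), sq_abs (u j)]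
      nlinarith [sq_nonneg (lam j)]
    calc Q u ≤ ∑ j : Fin n, (lam j) ^ 2 * R ^ 2 := Finset.sum_le_sum fun j _ => this j
      _ = S * R ^ 2 := by rw [hSdef, ← Finset.sum_mul]
  have hQdiff : ∀ u u' : Fin n → ℝ, ‖u‖ ≤ R → ‖u'‖ ≤ R →
      |Q u - Q u'| ≤ 2 * R * S * ‖u - u'‖ := by
    intro u u' hu hu'
    have h1 : Q u - Q u' = ∑ j : Fin n, (lam j) ^ 2 * ((u j) ^ 2 - (u' j) ^ 2) := by
      rw [hQdef, ← Finset.sum_sub_distrib]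
      exact Finset.sum_congr rfl fun j _ => by ring
    rw [h1]
    calc |∑ j : Fin n, (lam j) ^ 2 * ((u j) ^ 2 - (u' j) ^ 2)|
        ≤ ∑ j : Fin n, |(lam j) ^ 2 * ((u j) ^ 2 - (u' j) ^ 2)| :=
          Finset.abs_sum_le_sum_abs _ _
      _ ≤ ∑ j : Fin n, (lam j) ^ 2 * (‖u - u'‖ * (2 * R)) := by
          apply Finset.sum_le_sum
          intro j _
          have hj1 : |u j - u' j| ≤ ‖u - u'‖ := by
            have := norm_le_pi_norm (u - u') j
            simpa [Real.norm_eq_abs] using this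
          have hj2 : |u j + u' j| ≤ 2 * R := by
            have h1 : |u j| ≤ R := le_trans (norm_le_pi_norm u j) hu
            have h2 : |u' j| ≤ R := le_trans (norm_le_pi_norm u' j) hu'
            calc |u j + u' j| ≤ |u j| + |u' j| := abs_add_le _ _
              _ ≤ 2 * R := by linarith
          rw [abs_mul, abs_of_nonneg (sq_nonneg (lam j))]
          have : |(u j) ^ 2 - (u' j) ^ 2| = |u j - u' j| * |u j + u' j| := by
            rw [← abs_mul]; congr 1; ring
          rw [this]
          have hnn : (0:ℝ) ≤ |u j - u' j| := abs_nonneg _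
          have := mul_le_mul hj1 hj2 (abs_nonneg _) (norm_nonneg (u - u'))
          nlinarith [sq_nonneg (lam j)]
      _ = 2 * R * S * ‖u - u'‖ := by rw [← Finset.sum_mul, ← hSdef]; ring
  set B : ℝ := S * (Cm' + 2 * Km * R ^ 2 * S) with hB
  have hB0 : 0 ≤ B := by
    have : (0:ℝ) ≤ (Km : ℝ) := Km.coe_nonneg
    apply mul_nonneg hS0
    have h1 : (0:ℝ) ≤ 2 * (Km:ℝ) * R ^ 2 * S :=
      mul_nonneg (mul_nonneg (mul_nonneg two_pos.le this) (sq_nonneg R)) hS0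
    linarith
  set KG : NNReal := Real.toNNReal (max 1 B) with hKG
  have hKGcoe : (KG : ℝ) = max 1 B :=
    Real.coe_toNNReal _ (le_trans zero_le_one (le_max_left _ _))
  have hGlip : LipschitzOnWith KG G (Metric.closedBall 0 R) := by
    apply LipschitzOnWith.of_dist_le_mul
    intro y hy z hz
    rw [mem_closedBall_zero_iff] at hy hz
    have hy1 : ‖y.1‖ ≤ R := le_trans (norm_fst_le y) hy
    have hz1 : ‖z.1‖ ≤ R := le_trans (norm_fst_le z) hz
    rw [Prod.dist_eq, hKGcoe]
    have hd : (0:ℝ) ≤ dist y z := dist_nonneg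
    apply max_le
    · calc dist (G y).1 (G z).1 = dist y.2 z.2 := rfl
        _ ≤ dist y z := by rw [Prod.dist_eq]; exact le_max_right _ _
        _ ≤ max 1 B * dist y z := by nlinarith [le_max_left (1:ℝ) B]
    · have hmb : |mext m (Q y.1)| ≤ Cm' := by
        have := hCm _ (hQmem y.1 hy1)
        rw [Real.norm_eq_abs] at this
        exact le_trans this (le_max_left _ _)
      have hmlip : |mext m (Q y.1) - mext m (Q z.1)| ≤ (Km : ℝ) * (2 * R * S * ‖y.1 - z.1‖) := by
        have := hKm.dist_le_mul _ (hQmem y.1 hy1) _ (hQmem z.1 hz1)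
        rw [Real.dist_eq, Real.dist_eq] at this
        refine le_trans this ?_
        exact mul_le_mul_of_nonneg_left (hQdiff _ _ hy1 hz1) Km.coe_nonneg
      have hdist1 : ‖y.1 - z.1‖ ≤ dist y z := by
        rw [← dist_eq_norm, Prod.dist_eq]; exact le_max_left _ _
      have hcoord : ∀ j : Fin n, dist ((G y).2 j) ((G z).2 j) ≤ B * dist y z := by
        intro j
        have he : (G y).2 j - (G z).2 j
            = -(mext m (Q y.1)) * (lam j) ^ 2 * (y.1 j - z.1 j)
              - (mext m (Q y.1) - mext m (Q z.1)) * (lam j) ^ 2 * z.1 j := by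
          simp only [hG]
          ring
        rw [Real.dist_eq, he]
        have h1 : |(-(mext m (Q y.1))) * (lam j) ^ 2 * (y.1 j - z.1 j)|
            ≤ Cm' * S * dist y z := by
          rw [abs_mul, abs_mul, abs_neg, abs_of_nonneg (sq_nonneg (lam j))]
          have hyz : |y.1 j - z.1 j| ≤ dist y z := by
            refine le_trans ?_ (le_trans hdist1 (le_refl _))
            have := norm_le_pi_norm (y.1 - z.1) j
            simpa [Real.norm_eq_abs] using this
          have := mul_le_mul (mul_le_mul hmb (hlamS j) (sq_nonneg _) hCm'0) hyz
            (abs_nonneg _) (mul_nonneg hCm'0 hS0)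
          exact this
        have h2 : |(mext m (Q y.1) - mext m (Q z.1)) * (lam j) ^ 2 * z.1 j|
            ≤ (Km : ℝ) * (2 * R * S * dist y z) * S * R := by
          rw [abs_mul, abs_mul, abs_of_nonneg (sq_nonneg (lam j))]
          have hza : |z.1 j| ≤ R := le_trans (norm_le_pi_norm z.1 j) hz1
          have h2RS : (0:ℝ) ≤ 2 * R * S := mul_nonneg (mul_nonneg two_pos.le hR0) hS0
          have hm2 : |mext m (Q y.1) - mext m (Q z.1)| ≤ (Km : ℝ) * (2 * R * S * dist y z) := by
            refine le_trans hmlip (mul_le_mul_of_nonneg_left ?_ Km.coe_nonneg)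
            exact mul_le_mul_of_nonneg_left hdist1 h2RS
          calc |mext m (Q y.1) - mext m (Q z.1)| * (lam j) ^ 2 * |z.1 j|
              ≤ ((Km : ℝ) * (2 * R * S * dist y z)) * S * R := by
                apply mul_le_mul
                · apply mul_le_mul hm2 (hlamS j) (sq_nonneg _)
                  exact mul_nonneg Km.coe_nonneg (mul_nonneg h2RS hd)
                · exact hza
                · exact abs_nonneg _
                · exact mul_nonneg (mul_nonneg Km.coe_nonneg (mul_nonneg h2RS hd)) hS0
            _ = _ := by ring
        calc |(-(mext m (Q y.1))) * (lam j) ^ 2 * (y.1 j - z.1 j)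
              - (mext m (Q y.1) - mext m (Q z.1)) * (lam j) ^ 2 * z.1 j|
            ≤ |(-(mext m (Q y.1))) * (lam j) ^ 2 * (y.1 j - z.1 j)|
              + |(mext m (Q y.1) - mext m (Q z.1)) * (lam j) ^ 2 * z.1 j| := abs_sub _ _
          _ ≤ Cm' * S * dist y z + (Km : ℝ) * (2 * R * S * dist y z) * S * R := by
              linarith [h1, h2]
          _ = B * dist y z := by rw [hB]; ring
      have hBd : (0:ℝ) ≤ B * dist y z := mul_nonneg hB0 hd
      calc dist (G y).2 (G z).2 ≤ B * dist y z := (dist_pi_le_iff hBd).2 hcoord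
        _ ≤ max 1 B * dist y z := mul_le_mul_of_nonneg_right (le_max_right _ _) hd
  have hfvmem : ∀ s ∈ Ico (0:ℝ) T, fv s ∈ Metric.closedBall (0 : (Fin n → ℝ) × (Fin n → ℝ)) R :=
    fun s hs => mem_closedBall_zero_iff.2
      (le_trans (hRv s (Ico_subset_Icc_self hs)) (le_max_left _ _))
  have hfwmem : ∀ s ∈ Ico (0:ℝ) T, fw s ∈ Metric.closedBall (0 : (Fin n → ℝ) × (Fin n → ℝ)) R :=
    fun s hs => mem_closedBall_zero_iff.2
      (le_trans (hRw s (Ico_subset_Icc_self hs)) (le_max_right _ _))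
  have hfv' : ∀ s ∈ Ico (0:ℝ) T, HasDerivWithinAt fv (G (fv s)) (Ici s) s := by
    intro s hs
    have h1 : HasDerivWithinAt (fun r => (fv r).1) (G (fv s)).1 (Ici s) s := by
      apply hasDerivWithinAt_pi.2
      intro j
      exact hasDerivWithinAt_derIci_fst (hC2v j) hs.1
    have h2 : HasDerivWithinAt (fun r => (fv r).2) (G (fv s)).2 (Ici s) s := by
      apply hasDerivWithinAt_pi.2
      intro j
      have hval : (G (fv s)).2 j = derivWithin (derivWithin (v j) (Set.Ici 0)) (Set.Ici 0) s := by
        have hode := hodev j s hs.1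
        have hq := hσQv s hs.1
        simp only [hG, hfv]
        rw [mext_eq m (hQ0 _), ← hq]
        linarith
      rw [hval]
      exact hasDerivWithinAt_derIci_snd (hC2v j) hs.1
    exact h1.prodMk h2
  have hfw' : ∀ s ∈ Ico (0:ℝ) T, HasDerivWithinAt fw (G (fw s)) (Ici s) s := by
    intro s hs
    have h1 : HasDerivWithinAt (fun r => (fw r).1) (G (fw s)).1 (Ici s) s := by
      apply hasDerivWithinAt_pi.2
      intro j
      exact hasDerivWithinAt_derIci_fst (hC2w j) hs.1
    have h2 : HasDerivWithinAt (fun r => (fw r).2) (G (fw s)).2 (Ici s) s := by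
      apply hasDerivWithinAt_pi.2
      intro j
      have hval : (G (fw s)).2 j = derivWithin (derivWithin (w j) (Set.Ici 0)) (Set.Ici 0) s := by
        have hode := hodew j s hs.1
        have hq := hσQw s hs.1
        simp only [hG, hfw]
        rw [mext_eq m (hQ0 _), ← hq]
        linarith
      rw [hval]
      exact hasDerivWithinAt_derIci_snd (hC2w j) hs.1
    exact h1.prodMk h2
  have hinit : fv 0 = fw 0 := by
    simp only [hfv, hfw]
    refine Prod.ext ?_ ?_ <;> funext j
    · show v (↑j) 0 = w (↑j) 0
      rw [h0v, h0w]
    · show derivWithin (v ↑j) (Ici 0) 0 = derivWithin (w ↑j) (Ici 0) 0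
      rw [h0v', h0w']
  have heq : EqOn fv fw (Icc 0 T) :=
    ODE_solution_unique_of_mem_Icc_right (v := fun _ => G)
      (s := fun _ => Metric.closedBall 0 R) (fun _ _ => hGlip)
      hfvc hfv' hfvmem hfwc hfw' hfwmem hinit
  have hmem : t ∈ Icc (0:ℝ) T := ⟨ht, by linarith⟩
  by_cases hi : i < n
  · have := heq hmem
    have h1 := congrArg (fun p => p.1 ⟨i, hi⟩) this
    simpa [hfv, hfw] using h1
  · push_neg at hi
    have hiN : N < i := by omega
    rw [hvz i hiN t ht, hwz i hiN t ht]

/-- for locally Lipschitz m and initial data with finitely many nonzero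
components, global weak solutions are unique, and their components of index > N vanish
identically. -/
theorem stmt15 (lam : ℕ → ℝ) (hpos : ∀ i, 0 < lam i) (hmono : Monotone lam)
    (htop : Tendsto lam atTop atTop)
    (μ₁ : ℝ) (hμ₁ : 0 < μ₁) (m : ℝ → ℝ)
    (hm_lip : ∀ x, 0 ≤ x → ∃ K : NNReal, ∃ s ∈ nhdsWithin x (Set.Ici 0),
      LipschitzOnWith K m s)
    (hm_lb : ∀ σ, 0 ≤ σ → μ₁ ≤ m σ)
    (a b : ℕ → ℝ) (hab : InEnergy lam a b)
    (N : ℕ) (hN : 0 < N) (ha : ∀ i, N < i → a i = 0) (hb : ∀ i, N < i → b i = 0) :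
    (∀ v w : ℕ → ℝ → ℝ, WeakSol lam m a b v → WeakSol lam m a b w →
      ∀ i, ∀ t, 0 ≤ t → v i t = w i t) ∧
    (∀ v : ℕ → ℝ → ℝ, WeakSol lam m a b v →
      ∀ i, N < i → ∀ t, 0 ≤ t → v i t = 0) := by
  have vanish : ∀ v : ℕ → ℝ → ℝ, WeakSol lam m a b v →
      ∀ i, N < i → ∀ t, 0 ≤ t → v i t = 0 := by
    intro v hv i hi t ht
    exact vanish_of_zero_init hm_lip hv (ha i hi) (hb i hi) t ht
  refine ⟨?_, fun v hv i hi t ht => vanish v hv i hi t ht⟩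
  intro v w hv hw i t ht
  exact uniq_fin (N := N) hm_lip hv hw (fun j hj => vanish v hv j hj)
    (fun j hj => vanish w hw j hj) i t ht
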